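/- Let φ : ℝ → ℝ be a measurable odd function with 0 ≤ φ(x) ≤ 1 for x > 0, φ(x) = 1 for 0 < x ≤ 1, and φ(x) = 0 for x ≥ 2. Then for every z ∈ ℍ with |z| ≥ 3: |G_φ(z)| ≤ 4/|z|², where G_φ(z) = (1/(πi))∫_ℝ φ(t)/(z − t) dt. -/

import Mathlib

open MeasureTheory Real Complex Filter
open scoped Topology

noncomputable section

/-- `G_ψ(z) = (1/(πi)) ∫_ℝ ψ(t)/(z - t) dt`, the analytic extension `ψ + iHψ`
of an integrable `ψ : ℝ → ℝ` to the upper half-plane. -/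
noncomputable def UHG (ψ : ℝ → ℝ) (z : ℂ) : ℂ :=
  ((Real.pi : ℂ) * Complex.I)⁻¹ • ∫ t : ℝ, ((ψ t : ℂ) / (z - (t : ℂ)))

/-- The hypotheses on the bump function `φ`: measurable, odd, `0 ≤ φ ≤ 1` on `(0,∞)`,
`φ = 1` on `(0,1]` and `φ = 0` on `[2,∞)`. -/
def IsPhi (φ : ℝ → ℝ) : Prop :=
  Measurable φ ∧ (∀ x : ℝ, φ (-x) = - φ x) ∧ (∀ x : ℝ, 0 < x → 0 ≤ φ x ∧ φ x ≤ 1) ∧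
    (∀ x : ℝ, 0 < x → x ≤ 1 → φ x = 1) ∧ (∀ x : ℝ, 2 ≤ x → φ x = 0)

lemma abs_int_abs : ∫ t in Set.Icc (-2:ℝ) 2, |t| = 4 := by
  rw [MeasureTheory.integral_Icc_eq_integral_Ioc,
    ← intervalIntegral.integral_of_le (by norm_num : (-2:ℝ) ≤ 2)]
  have h1 : ∫ t in (0:ℝ)..2, |t| = 2 := by
    rw [intervalIntegral.integral_congr (g := fun t => t)
      (fun t ht => by
        rw [Set.uIcc_of_le (by norm_num : (0:ℝ) ≤ 2)] at ht
        exact _root_.abs_of_nonneg ht.1)]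
    rw [integral_id]; norm_num
  have h2 : ∫ t in (-2:ℝ)..0, |t| = 2 := by
    rw [intervalIntegral.integral_congr (g := fun t => -t)
      (fun t ht => by
        rw [Set.uIcc_of_le (by norm_num : (-2:ℝ) ≤ 0)] at ht
        exact _root_.abs_of_nonpos ht.2)]
    rw [intervalIntegral.integral_neg, integral_id]; norm_num
  rw [← intervalIntegral.integral_add_adjacent_intervals
    (_root_.continuous_abs.intervalIntegrable (-2) 0) (_root_.continuous_abs.intervalIntegrable 0 2),
    h1, h2]
  norm_num

/-- The decay estimate `|(φ + iHφ)(z)| ≤ 4/|z|²` for `z ∈ ℍ`, `|z| ≥ 3`. -/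
theorem stmt_10 (φ : ℝ → ℝ) (hφ : IsPhi φ) :
    ∀ z : ℂ, 0 < z.im → 3 ≤ ‖z‖ → ‖UHG φ z‖ ≤ 4 / ‖z‖ ^ 2 := by
  obtain ⟨hmeas, hodd, hbd, h1, h0⟩ := hφ
  intro z hz hz3
  have hzpos : (0:ℝ) < ‖z‖ := by linarith
  -- basic facts about φ
  have hφ0 : φ 0 = 0 := by have := hodd 0; simp at this; linarith
  have habs : ∀ t : ℝ, |φ t| ≤ 1 := by
    intro t
    rcases lt_trichotomy t 0 with ht | ht | ht
    · have h := hbd (-t) (by linarith)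
      have : φ t = -φ (-t) := by
        have h2 := hodd (-t); rw [neg_neg] at h2; linarith
      rw [this, abs_neg, _root_.abs_of_nonneg h.1]; exact h.2
    · simp [ht, hφ0]
    · have h := hbd t ht
      rw [_root_.abs_of_nonneg h.1]; exact h.2
  have hsupp : ∀ t : ℝ, 2 < |t| → φ t = 0 := by
    intro t ht
    rcases le_or_gt 0 t with h | h
    · exact h0 t (by rw [_root_.abs_of_nonneg h] at ht; linarith)
    · have : φ (-t) = 0 := h0 (-t) (by rw [_root_.abs_of_neg h] at ht; linarith)
      have h2 := hodd (-t)
      rw [neg_neg] at h2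
      linarith
  -- nonvanishing denominators
  have hne1 : ∀ t : ℝ, z - (t:ℂ) ≠ 0 := by
    intro t h
    have : (z - (t:ℂ)).im = 0 := by rw [h]; simp
    simp at this; linarith
  have hne2 : ∀ t : ℝ, z + (t:ℂ) ≠ 0 := by
    intro t h
    have : (z + (t:ℂ)).im = 0 := by rw [h]; simp
    simp at this; linarith
  set f : ℝ → ℂ := fun t => (φ t : ℂ) / (z - (t:ℂ)) with hf_def
  set g : ℝ → ℂ := fun t => (t : ℂ) * (φ t : ℂ) / (z^2 - (t:ℂ)^2) with hg_def
  -- integrability of f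
  have hf_meas : AEStronglyMeasurable f volume := by
    apply Measurable.aestronglyMeasurable
    have heq : f = fun t => (φ t : ℂ) * (z - (t:ℂ))⁻¹ := by
      funext t; simp [hf_def, div_eq_mul_inv]
    rw [heq]
    exact (Complex.measurable_ofReal.comp hmeas).mul
      ((continuous_const.sub Complex.continuous_ofReal).inv₀ hne1).measurable
  have hf_bd : ∀ t : ℝ, ‖f t‖ ≤
      Set.indicator (Set.Icc (-2:ℝ) 2) (fun _ => (z.im)⁻¹) t := by
    intro t
    rcases le_or_gt |t| 2 with ht | ht
    · rw [Set.indicator_of_mem (Set.mem_Icc.2 (abs_le.1 ht))]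
      rw [hf_def]
      simp only [norm_div, Complex.norm_real]
      have him : z.im ≤ ‖z - (t:ℂ)‖ := by
        have := Complex.abs_im_le_norm (z - (t:ℂ))
        simp at this
        calc z.im = |z.im| := (_root_.abs_of_pos hz).symm
          _ ≤ _ := this
      calc |φ t| / ‖z - (t:ℂ)‖ ≤ 1 / z.im := by
            apply div_le_div₀ (by positivity) (habs t) hz him
        _ = (z.im)⁻¹ := one_div _
    · rw [hf_def]; simp only [hsupp t ht, Complex.ofReal_zero, zero_div, norm_zero]
      exact Set.indicator_nonneg (fun _ _ => by positivity) t
  have hf_int : Integrable f := by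
    apply Integrable.mono' (g := Set.indicator (Set.Icc (-2:ℝ) 2) (fun _ => (z.im)⁻¹))
      ?_ hf_meas (ae_of_all _ hf_bd)
    rw [integrable_indicator_iff measurableSet_Icc]
    exact integrableOn_const measure_Icc_lt_top.ne
  -- integrability of f ∘ neg
  have hfn_int : Integrable (fun t => f (-t)) := by
    have := hf_int.comp_neg
    simpa using this
  -- symmetrization: ∫ f = ∫ g
  have key : ∫ t : ℝ, f t = ∫ t : ℝ, g t := by
    have hneg : ∫ t : ℝ, f (-t) = ∫ t : ℝ, f t := integral_neg_eq_self f volume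
    calc ∫ t : ℝ, f t = (2:ℂ)⁻¹ * ((∫ t : ℝ, f t) + ∫ t : ℝ, f (-t)) := by
          rw [hneg, ← two_mul, inv_mul_cancel_left₀ (two_ne_zero)]
      _ = (2:ℂ)⁻¹ * ∫ t : ℝ, (f t + f (-t)) := by rw [integral_add hf_int hfn_int]
      _ = ∫ t : ℝ, (2:ℂ)⁻¹ * (f t + f (-t)) := (integral_const_mul _ _).symm
      _ = ∫ t : ℝ, g t := by
          apply integral_congr_ae
          filter_upwards with t
          rw [hf_def, hg_def]
          simp only
          have hodd' : (φ (-t) : ℂ) = -(φ t : ℂ) := by rw [hodd t]; push_cast; ring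
          rw [show ((-t : ℝ) : ℂ) = -(t:ℂ) by push_cast; ring, hodd']
          have h1 := hne1 t
          have h2 := hne2 t
          have h3 : z^2 - (t:ℂ)^2 ≠ 0 := by
            intro h
            rcases mul_eq_zero.1 (show (z - (t:ℂ)) * (z + (t:ℂ)) = 0 by rw [← h]; ring) with h' | h'
            · exact h1 h'
            · exact h2 h'
          rw [sub_neg_eq_add]
          field_simp
          ring
  -- the dominating function for g
  set d : ℝ → ℝ := fun t =>
    Set.indicator (Set.Icc (-2:ℝ) 2) (fun t => 9/5 * |t| / ‖z‖^2) t with hd_def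
  have hz2 : (9:ℝ) ≤ ‖z‖^2 := by nlinarith
  have hg_bd : ∀ t : ℝ, ‖g t‖ ≤ d t := by
    intro t
    rcases le_or_gt |t| 2 with ht | ht
    · simp only [hd_def]
      rw [Set.indicator_of_mem (Set.mem_Icc.2 (abs_le.1 ht))]
      simp only [hg_def]
      simp only [norm_div, norm_mul, Complex.norm_real, Complex.norm_natCast]
      have hden : 5/9 * ‖z‖^2 ≤ ‖z^2 - (t:ℂ)^2‖ := by
        have h1 : ‖z^2‖ - ‖((t:ℂ))^2‖ ≤ ‖z^2 - (t:ℂ)^2‖ := norm_sub_norm_le _ _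
        have h2 : ‖z^2‖ = ‖z‖^2 := by rw [norm_pow]
        have h3 : ‖((t:ℂ))^2‖ = t^2 := by
          rw [norm_pow]; simp [_root_.sq_abs]
        have h4 : t^2 ≤ 4 := by nlinarith [abs_nonneg t, _root_.sq_abs t]
        nlinarith
      simp only [Real.norm_eq_abs]
      calc |t| * |φ t| / ‖z^2 - (t:ℂ)^2‖ ≤ |t| * 1 / (5/9 * ‖z‖^2) := by
            apply div_le_div₀ (by positivity)
              (by nlinarith [abs_nonneg t, abs_nonneg (φ t), habs t])
              (by positivity) hden
        _ = 9/5 * |t| / ‖z‖^2 := by field_simp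
    · have hmem : t ∉ Set.Icc (-2:ℝ) 2 := by
        intro hc
        rcases Set.mem_Icc.1 hc with ⟨ha, hb⟩
        rcases lt_abs.1 ht with h | h <;> linarith
      simp only [hd_def, hg_def, hsupp t ht, Complex.ofReal_zero, mul_zero, zero_div, norm_zero,
        Set.indicator_of_notMem hmem]
      exact le_refl 0
  have hd_int : Integrable d := by
    simp only [hd_def]
    rw [integrable_indicator_iff measurableSet_Icc]
    apply ContinuousOn.integrableOn_compact isCompact_Icc
    fun_prop
  have hg_meas : AEStronglyMeasurable g volume := by
    apply Measurable.aestronglyMeasurable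
    have hne3 : ∀ t : ℝ, z^2 - ((t:ℂ))^2 ≠ 0 := by
      intro t h
      have : (z - (t:ℂ)) * (z + (t:ℂ)) = 0 := by rw [← h]; ring
      rcases mul_eq_zero.1 this with h' | h'
      · exact hne1 t h'
      · exact hne2 t h'
    have heq : g = fun t : ℝ => ((t:ℂ) * ((φ t : ℝ) : ℂ)) * (z^2 - ((t:ℂ))^2)⁻¹ := by
      funext t; simp [hg_def, div_eq_mul_inv]
    rw [heq]
    exact ((Complex.measurable_ofReal.mul (Complex.measurable_ofReal.comp hmeas)).mul
      ((continuous_const.sub (Complex.continuous_ofReal.pow 2)).inv₀ hne3).measurable)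
  -- bound the integral of g
  have hbound : ‖∫ t : ℝ, g t‖ ≤ 36/5 / ‖z‖^2 := by
    calc ‖∫ t : ℝ, g t‖ ≤ ∫ t : ℝ, d t :=
          norm_integral_le_of_norm_le hd_int (ae_of_all _ hg_bd)
      _ = ∫ t in Set.Icc (-2:ℝ) 2, 9/5 * |t| / ‖z‖^2 := by
          simp only [hd_def]
          rw [integral_indicator measurableSet_Icc]
      _ = (9/5 / ‖z‖^2) * ∫ t in Set.Icc (-2:ℝ) 2, |t| := by
          rw [← integral_const_mul]
          congr 1; funext t; ring
      _ = 36/5 / ‖z‖^2 := by rw [abs_int_abs]; ring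
  -- conclude
  have hUHG : ‖UHG φ z‖ = π⁻¹ * ‖∫ t : ℝ, f t‖ := by
    rw [UHG, norm_smul, norm_inv, norm_mul, Complex.norm_I, Complex.norm_real,
      Real.norm_eq_abs, _root_.abs_of_pos Real.pi_pos, mul_one]
  rw [hUHG, key]
  have hπ : (3:ℝ) ≤ π := by linarith [Real.pi_gt_three]
  calc π⁻¹ * ‖∫ t : ℝ, g t‖ ≤ π⁻¹ * (36/5 / ‖z‖^2) := by
        apply mul_le_mul_of_nonneg_left hbound (by positivity)
    _ ≤ 3⁻¹ * (36/5 / ‖z‖^2) := by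
        apply mul_le_mul_of_nonneg_right _ (by positivity)
        exact inv_anti₀ (by norm_num) hπ
    _ = 12/5 / ‖z‖^2 := by ring
    _ ≤ 4 / ‖z‖^2 := by gcongr <;> norm_num
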